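/- There exists a constant C > 0 such that for all ε, t with 0 < ε ≤ t, one has ∫_{ℝ⁴} U_{ε,te₁}(x)²·U_{ε,−te₁}(x)² dx ≤ C·(ε⁴/t⁴)·(1 + log(t/ε)). -/

import Mathlib

noncomputable section

open MeasureTheory Real RealInnerProductSpace

/-- Euclidean four-space. -/
abbrev E4 : Type := EuclideanSpace ℝ (Fin 4)

/-- The normalizing constant `c₄ = (6/π²)^(1/4)`. -/
def c4 : ℝ := (6 / Real.pi ^ 2) ^ ((1 : ℝ) / 4)

/-- The Sobolev constant `S₄ = 8/c₄²`. -/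
def S4 : ℝ := 8 / c4 ^ 2

/-- The standard (normalized) bubble `U(x) = c₄ (1+|x|²)⁻¹`. -/
def Ubub (x : E4) : ℝ := c4 * (1 + ‖x‖ ^ 2)⁻¹

/-- The rescaled/translated bubble `U_{ε,x₀}(x) = ε⁻¹ U((x - x₀)/ε)`. -/
def Ueps (ε : ℝ) (x₀ : E4) (x : E4) : ℝ := ε⁻¹ * Ubub (ε⁻¹ • (x - x₀))

/-- The double bubble `Û_{ε,x₀} = U_{ε,x₀} + U_{ε,-x₀}`. -/
def Uhat (ε : ℝ) (x₀ : E4) (x : E4) : ℝ := Ueps ε x₀ x + Ueps ε (-x₀) x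

/-- The first standard basis vector of `ℝ⁴`. -/
def e1 : E4 := EuclideanSpace.single (0 : Fin 4) (1 : ℝ)

/-- The Yamabe (Sobolev) quotient `Q(u) = 6 ∫ |∇u|² / (∫ u⁴)^{1/2}` on `ℝ⁴`. -/
def Qyam (u : E4 → ℝ) : ℝ :=
  6 * (∫ x : E4, ‖gradient u x‖ ^ 2) / Real.sqrt (∫ x : E4, (u x) ^ 4)

open Set Metric

lemma c4_pos : 0 < c4 := by
  have := Real.pi_pos
  exact Real.rpow_pos_of_pos (by positivity) _

lemma Ueps_eq {ε : ℝ} (hε : 0 < ε) (z x : E4) :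
    Ueps ε z x = c4 * (ε / (ε ^ 2 + ‖x - z‖ ^ 2)) := by
  have hd : (0:ℝ) < ε ^ 2 + ‖x - z‖ ^ 2 := by positivity
  unfold Ueps Ubub
  rw [norm_smul, Real.norm_eq_abs, abs_of_pos (inv_pos.2 hε)]
  field_simp

/-- Integrability of the auxiliary radial function. -/
lemma aux_integrable {ε t : ℝ} (hε : 0 < ε) (ht : 0 < t) :
    Integrable (fun y : E4 => ((ε^2 + ‖y‖^2)^2 * (t^2 + ‖y‖^2)^2)⁻¹) := by
  set m : ℝ := min (ε^2) 1 * min (t^2) 1 with hm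
  have hm0 : 0 < m := by positivity
  have h8 : ((Module.finrank ℝ E4 : ℝ) < 8) := by
    simp [finrank_euclideanSpace_fin]; norm_num
  have base := (integrable_rpow_neg_one_add_norm_sq (E := E4) (μ := volume) h8).const_mul ((m^2)⁻¹)
  refine base.mono' ?_ (Filter.Eventually.of_forall fun y => ?_)
  · exact (Continuous.inv₀ (by fun_prop) (fun y => by positivity)).aestronglyMeasurable
  · set s : ℝ := ‖y‖^2 with hs
    have hs0 : (0:ℝ) ≤ s := by positivity
    have hrpow : ((1:ℝ) + s) ^ ((-8:ℝ)/2) = ((1+s)^4)⁻¹ := by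
      rw [show ((-8:ℝ))/2 = -((4:ℕ):ℝ) by norm_num, Real.rpow_neg (by linarith),
        Real.rpow_natCast]
    have h1 : min (ε^2) 1 * (1+s) ≤ ε^2 + s := by
      have := min_le_left (ε^2) 1; have := min_le_right (ε^2) 1
      nlinarith
    have h2 : min (t^2) 1 * (1+s) ≤ t^2 + s := by
      have := min_le_left (t^2) 1; have := min_le_right (t^2) 1
      nlinarith
    have key : m^2 * (1+s)^4 ≤ (ε^2+s)^2 * (t^2+s)^2 := by
      have p1 : (min (ε^2) 1 * (1+s))^2 ≤ (ε^2+s)^2 := by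
        apply pow_le_pow_left₀ (by positivity) h1
      have p2 : (min (t^2) 1 * (1+s))^2 ≤ (t^2+s)^2 := by
        apply pow_le_pow_left₀ (by positivity) h2
      calc m^2 * (1+s)^4 = (min (ε^2) 1 * (1+s))^2 * (min (t^2) 1 * (1+s))^2 := by ring
        _ ≤ (ε^2+s)^2 * (t^2+s)^2 := mul_le_mul p1 p2 (by positivity) (by positivity)
    rw [Real.norm_eq_abs, abs_of_nonneg (by positivity), hrpow,
      show ((m^2)⁻¹ * ((1+s)^4)⁻¹ : ℝ) = (m^2 * (1+s)^4)⁻¹ by rw [mul_inv]]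
    exact inv_anti₀ (by positivity) key

/-- The radial reduction. -/
lemma aux_radial {ε t : ℝ} :
    ∫ x : E4, ((ε^2 + ‖x‖^2)^2 * (t^2 + ‖x‖^2)^2)⁻¹
      = 4 * ((volume (ball (0:E4) 1)).toReal *
        ∫ r in Ioi (0:ℝ), r ^ 3 * ((ε^2 + r^2)^2 * (t^2 + r^2)^2)⁻¹) := by
  have h := MeasureTheory.integral_fun_norm_addHaar (volume : Measure E4)
    (fun r : ℝ => ((ε^2 + r^2)^2 * (t^2 + r^2)^2)⁻¹)
  simpa [measureReal_def, finrank_euclideanSpace_fin, nsmul_eq_mul, smul_eq_mul, mul_assoc] using h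

/-- Bound on the one-dimensional radial integral. -/
lemma aux_radial_bound {ε t : ℝ} (hε : 0 < ε) (hεt : ε ≤ t) :
    ∫ r in Ioi (0:ℝ), r ^ 3 * ((ε^2 + r^2)^2 * (t^2 + r^2)^2)⁻¹
      ≤ (t^4)⁻¹ * (1 + Real.log (t / ε)) := by
  have ht : 0 < t := hε.trans_le hεt
  set F : ℝ → ℝ := fun r => r ^ 3 * ((ε^2 + r^2)^2 * (t^2 + r^2)^2)⁻¹ with hF
  have hFc : Continuous F := by
    exact (continuous_pow 3).mul (Continuous.inv₀ (by fun_prop) (fun r => by positivity))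
  have hI1 : IntegrableOn F (Ioc 0 t) := hFc.integrableOn_Ioc
  -- integrability on (t, ∞) by domination
  have hg2 : IntegrableOn (fun r : ℝ => (4*t^2)⁻¹ * r ^ (-3:ℝ)) (Ioi t) :=
    (integrableOn_Ioi_rpow_of_lt (by norm_num) ht).const_mul _
  have hbound2 : ∀ r : ℝ, r ∈ Ioi t → F r ≤ (4*t^2)⁻¹ * r ^ (-3:ℝ) := by
    intro r hr
    have hr0 : 0 < r := ht.trans hr
    have hrt : t < r := hr
    have hrp : r ^ (-3:ℝ) = (r^3)⁻¹ := by
      rw [show (-3:ℝ) = -((3:ℕ):ℝ) by norm_num, Real.rpow_neg hr0.le, Real.rpow_natCast]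
    rw [hrp, hF]
    have e2 : r^4 ≤ (ε^2+r^2)^2 := by nlinarith [sq_nonneg ε, sq_nonneg r]
    have e1 : 4*t^2*r^2 ≤ (t^2+r^2)^2 := by nlinarith [sq_nonneg (t^2 - r^2)]
    have hD : 4*t^2 * r^3 * r^3 ≤ (ε^2+r^2)^2 * (t^2+r^2)^2 := by
      nlinarith [mul_le_mul e2 e1 (by positivity) (by positivity)]
    have hDinv : ((ε^2+r^2)^2 * (t^2+r^2)^2)⁻¹ ≤ (4*t^2 * r^3 * r^3)⁻¹ :=
      inv_anti₀ (by positivity) hD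
    calc r ^ 3 * ((ε^2 + r^2)^2 * (t^2 + r^2)^2)⁻¹
        ≤ r^3 * (4*t^2 * r^3 * r^3)⁻¹ :=
          mul_le_mul_of_nonneg_left hDinv (by positivity)
      _ = (4*t^2)⁻¹ * (r^3)⁻¹ := by
          field_simp
  have hI2 : IntegrableOn F (Ioi t) := by
    refine hg2.mono' (hFc.aestronglyMeasurable.restrict) ?_
    refine (ae_restrict_iff' measurableSet_Ioi).2 (Filter.Eventually.of_forall fun r hr => ?_)
    have hr0 : 0 < r := ht.trans hr
    have h0 : 0 ≤ F r := by
      simp only [hF]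
      positivity
    rw [Real.norm_eq_abs, abs_of_nonneg h0]
    exact hbound2 r hr
  -- split the integral
  have hsplit : ∫ r in Ioi (0:ℝ), F r = (∫ r in Ioc 0 t, F r) + ∫ r in Ioi t, F r := by
    rw [← setIntegral_union (Ioc_disjoint_Ioi le_rfl) measurableSet_Ioi hI1 hI2,
      Ioc_union_Ioi_eq_Ioi ht.le]
  -- first piece
  have hg1 : IntegrableOn (fun r : ℝ => (t^4)⁻¹ * (r / (ε^2 + r^2))) (Ioc 0 t) := by
    apply Continuous.integrableOn_Ioc
    exact continuous_const.mul (continuous_id.div (by fun_prop) (fun r => by positivity))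
  have hb1 : ∫ r in Ioc (0:ℝ) t, F r ≤ (t^4)⁻¹ * ∫ r in Ioc (0:ℝ) t, r / (ε^2 + r^2) := by
    rw [← integral_const_mul]
    refine setIntegral_mono_on hI1 hg1 measurableSet_Ioc fun r hr => ?_
    have hr0 : 0 < r := hr.1
    have e3 : r^2 * (ε^2 + r^2) ≤ (ε^2 + r^2)^2 := by nlinarith [sq_nonneg ε, sq_nonneg r]
    have e4 : t^4 ≤ (t^2+r^2)^2 := by nlinarith [sq_nonneg r, sq_nonneg t, sq_nonneg (t*r)]
    have hD : t^4 * (r^2 * (ε^2+r^2)) ≤ (ε^2+r^2)^2 * (t^2+r^2)^2 := by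
      nlinarith [mul_le_mul e3 e4 (by positivity) (by positivity)]
    have hDinv : ((ε^2+r^2)^2 * (t^2+r^2)^2)⁻¹ ≤ (t^4 * (r^2 * (ε^2+r^2)))⁻¹ :=
      inv_anti₀ (by positivity) hD
    calc F r ≤ r^3 * (t^4 * (r^2 * (ε^2+r^2)))⁻¹ :=
          mul_le_mul_of_nonneg_left hDinv (by positivity)
      _ = (t^4)⁻¹ * (r / (ε^2 + r^2)) := by
          field_simp
  have hlog : ∫ r in Ioc (0:ℝ) t, r / (ε^2 + r^2)
      = (Real.log (ε^2 + t^2) - Real.log (ε^2)) / 2 := by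
    rw [← intervalIntegral.integral_of_le ht.le]
    have hderiv : ∀ x ∈ uIcc (0:ℝ) t,
        HasDerivAt (fun r : ℝ => Real.log (ε^2 + r^2) / 2) (x / (ε^2 + x^2)) x := by
      intro x _
      have h1 : HasDerivAt (fun r : ℝ => ε^2 + r^2) (2*x) x := by
        simpa using (hasDerivAt_pow 2 x).const_add (ε^2)
      have h2 := (Real.hasDerivAt_log (by positivity : (ε^2 + x^2) ≠ 0)).comp x h1
      have h3 := h2.div_const 2
      exact h3.congr_deriv (by ring)
    have hint : IntervalIntegrable (fun x : ℝ => x / (ε^2 + x^2)) volume 0 t := by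
      apply Continuous.intervalIntegrable
      exact continuous_id.div (by fun_prop) (fun x => by positivity)
    rw [intervalIntegral.integral_eq_sub_of_hasDerivAt hderiv hint]
    simp
    ring
  -- second piece
  have hb2 : ∫ r in Ioi t, F r ≤ (4*t^2)⁻¹ * ((t^2)⁻¹ / 2) := by
    calc ∫ r in Ioi t, F r ≤ ∫ r in Ioi t, (4*t^2)⁻¹ * r ^ (-3:ℝ) :=
          setIntegral_mono_on hI2 hg2 measurableSet_Ioi hbound2
      _ = (4*t^2)⁻¹ * ∫ r in Ioi t, r ^ (-3:ℝ) := integral_const_mul _ _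
      _ = (4*t^2)⁻¹ * ((t^2)⁻¹ / 2) := by
          rw [integral_Ioi_rpow_of_lt (by norm_num) ht,
            show (-3:ℝ) + 1 = -2 by norm_num, Real.rpow_neg ht.le,
            show ((2:ℝ)) = ((2:ℕ):ℝ) by norm_num, Real.rpow_natCast]
          norm_num
  -- log bound
  have hL0 : 0 ≤ Real.log (t / ε) := Real.log_nonneg ((one_le_div hε).2 hεt)
  have hlogle : Real.log (ε^2 + t^2) - Real.log (ε^2) ≤ Real.log 2 + 2 * Real.log (t / ε) := by
    have h1 : Real.log (ε^2 + t^2) - Real.log (ε^2) = Real.log ((ε^2 + t^2) / ε^2) := by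
      rw [Real.log_div (by positivity) (by positivity)]
    rw [h1]
    have h2 : (ε^2 + t^2) / ε^2 ≤ 2 * (t/ε)^2 := by
      rw [show ((2:ℝ) * (t/ε)^2) = (2*t^2) / ε^2 by rw [div_pow]; ring]
      gcongr
      nlinarith [hεt, hε]
    calc Real.log ((ε^2 + t^2) / ε^2) ≤ Real.log (2 * (t/ε)^2) :=
          Real.log_le_log (by positivity) h2
      _ = Real.log 2 + 2 * Real.log (t / ε) := by
          rw [Real.log_mul (by norm_num) (by positivity), Real.log_pow]
          push_cast; ring
  have hlog2 : Real.log 2 ≤ 0.6931471808 := Real.log_two_lt_d9.le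
  calc ∫ r in Ioi (0:ℝ), F r = (∫ r in Ioc 0 t, F r) + ∫ r in Ioi t, F r := hsplit
    _ ≤ (t^4)⁻¹ * ((Real.log (ε^2 + t^2) - Real.log (ε^2)) / 2) + (4*t^2)⁻¹ * ((t^2)⁻¹ / 2) := by
        rw [← hlog]
        exact add_le_add hb1 hb2
    _ ≤ (t^4)⁻¹ * (1 + Real.log (t / ε)) := by
        have ht4 : (0:ℝ) < (t^4)⁻¹ := by positivity
        have h42 : ((4*t^2)⁻¹ * ((t^2)⁻¹ / 2) : ℝ) = (t^4)⁻¹ / 8 := by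
          field_simp; ring
        rw [h42]
        have : (Real.log (ε^2 + t^2) - Real.log (ε^2)) / 2 ≤
            Real.log (t/ε) + 0.6931471808 / 2 := by linarith
        nlinarith [ht4, hL0]

set_option maxHeartbeats 1000000 in
/-- There is `C > 0` such that for `0 < ε ≤ t`,
`∫ U_{ε,te₁}² U_{ε,-te₁}² ≤ C (ε⁴/t⁴)(1 + log(t/ε))`. -/
theorem stmt12 :
    ∃ C : ℝ, 0 < C ∧ ∀ ε t : ℝ, 0 < ε → ε ≤ t →
      (∫ x : E4, Ueps ε (t • e1) x ^ 2 * Ueps ε (-(t • e1)) x ^ 2)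
        ≤ C * (ε ^ 4 / t ^ 4) * (1 + Real.log (t / ε)) := by
  set V : ℝ := (volume (ball (0:E4) 1)).toReal with hV
  have hVpos : 0 < V :=
    ENNReal.toReal_pos (measure_ball_pos _ _ one_pos).ne' measure_ball_lt_top.ne
  have hc4 := c4_pos
  refine ⟨32 * c4^4 * V, by positivity, ?_⟩
  intro ε t hε hεt
  have ht : 0 < t := hε.trans_le hεt
  set a : E4 := t • e1 with ha
  have hna : ‖a‖ = t := by
    rw [ha, norm_smul, Real.norm_eq_abs, abs_of_pos ht, e1, EuclideanSpace.norm_single,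
      norm_one, mul_one]
  set h : E4 → ℝ := fun y => ((ε^2 + ‖y‖^2)^2 * (t^2 + ‖y‖^2)^2)⁻¹ with hh
  have hInt : Integrable h := aux_integrable hε ht
  have hIntA : Integrable (fun x : E4 => h (x - a)) := hInt.comp_sub_right a
  have hIntB : Integrable (fun x : E4 => h (x + a)) := hInt.comp_add_right a
  -- pointwise bound
  have key : ∀ x : E4, Ueps ε a x ^ 2 * Ueps ε (-a) x ^ 2
      ≤ 4 * c4^4 * ε^4 * (h (x - a) + h (x + a)) := by
    intro x
    have hxa : ‖x - -a‖ = ‖x + a‖ := by rw [sub_neg_eq_add]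
    rw [Ueps_eq hε, Ueps_eq hε, hxa]
    set p : ℝ := ‖x - a‖ with hp
    set q : ℝ := ‖x + a‖ with hq
    have hp0 : 0 ≤ p := norm_nonneg _
    have hq0 : 0 ≤ q := norm_nonneg _
    have hpq : 2 * t ≤ p + q := by
      have hsub : (x - a) - (x + a) = -(a + a) := by abel
      have h2a : ‖(x - a) - (x + a)‖ = 2 * t := by
        rw [hsub, norm_neg, ← two_smul ℝ a, norm_smul, Real.norm_ofNat, hna]
      calc 2 * t = ‖(x - a) - (x + a)‖ := h2a.symm
        _ ≤ p + q := norm_sub_le _ _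
    have hA : (0:ℝ) < ε^2 + p^2 := by positivity
    have hB : (0:ℝ) < ε^2 + q^2 := by positivity
    have hhA : h (x - a) = ((ε^2 + p^2)^2 * (t^2 + p^2)^2)⁻¹ := rfl
    have hhB : h (x + a) = ((ε^2 + q^2)^2 * (t^2 + q^2)^2)⁻¹ := rfl
    rw [hhA, hhB]
    have hLHS : (c4 * (ε / (ε^2 + p^2)))^2 * (c4 * (ε / (ε^2 + q^2)))^2
        = c4^4 * ε^4 * ((ε^2 + p^2)^2 * (ε^2 + q^2)^2)⁻¹ := by
      field_simp
    rw [hLHS]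
    have main : ((ε^2 + p^2)^2 * (ε^2 + q^2)^2)⁻¹
        ≤ 4 * (((ε^2 + p^2)^2 * (t^2 + p^2)^2)⁻¹ + ((ε^2 + q^2)^2 * (t^2 + q^2)^2)⁻¹) := by
      rcases le_total p q with hle | hle
      · -- q is large: t ≤ q, p ≤ q
        have htq : t ≤ q := by linarith
        have hTA : t^2 + p^2 ≤ 2 * (ε^2 + q^2) := by nlinarith
        have hTA2 : (t^2 + p^2)^2 ≤ 4 * (ε^2 + q^2)^2 := by
          calc (t^2 + p^2)^2 ≤ (2 * (ε^2 + q^2))^2 :=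
                pow_le_pow_left₀ (by positivity) hTA 2
            _ = 4 * (ε^2 + q^2)^2 := by ring
        have hX : (ε^2 + p^2)^2 * (t^2 + p^2)^2
            ≤ 4 * ((ε^2 + p^2)^2 * (ε^2 + q^2)^2) := by
          calc (ε^2 + p^2)^2 * (t^2 + p^2)^2
              ≤ (ε^2 + p^2)^2 * (4 * (ε^2 + q^2)^2) :=
                mul_le_mul_of_nonneg_left hTA2 (sq_nonneg _)
            _ = 4 * ((ε^2 + p^2)^2 * (ε^2 + q^2)^2) := by ring
        have h4 : (4 * ((ε^2 + p^2)^2 * (ε^2 + q^2)^2))⁻¹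
            ≤ ((ε^2 + p^2)^2 * (t^2 + p^2)^2)⁻¹ := inv_anti₀ (by positivity) hX
        have hnn : (0:ℝ) ≤ ((ε^2 + q^2)^2 * (t^2 + q^2)^2)⁻¹ := by positivity
        calc ((ε^2 + p^2)^2 * (ε^2 + q^2)^2)⁻¹
            = 4 * (4 * ((ε^2 + p^2)^2 * (ε^2 + q^2)^2))⁻¹ := by
              have h1 : ((ε^2 + p^2)^2 : ℝ) ≠ 0 := by positivity
              have h2 : ((ε^2 + q^2)^2 : ℝ) ≠ 0 := by positivity
              field_simp
          _ ≤ 4 * ((ε^2 + p^2)^2 * (t^2 + p^2)^2)⁻¹ := by linarith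
          _ ≤ 4 * (((ε^2 + p^2)^2 * (t^2 + p^2)^2)⁻¹ + ((ε^2 + q^2)^2 * (t^2 + q^2)^2)⁻¹) := by
              linarith
      · -- p is large: t ≤ p, q ≤ p
        have htp : t ≤ p := by linarith
        have hTB : t^2 + q^2 ≤ 2 * (ε^2 + p^2) := by nlinarith
        have hTB2 : (t^2 + q^2)^2 ≤ 4 * (ε^2 + p^2)^2 := by
          calc (t^2 + q^2)^2 ≤ (2 * (ε^2 + p^2))^2 :=
                pow_le_pow_left₀ (by positivity) hTB 2
            _ = 4 * (ε^2 + p^2)^2 := by ring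
        have hX : (ε^2 + q^2)^2 * (t^2 + q^2)^2
            ≤ 4 * ((ε^2 + p^2)^2 * (ε^2 + q^2)^2) := by
          calc (ε^2 + q^2)^2 * (t^2 + q^2)^2
              ≤ (ε^2 + q^2)^2 * (4 * (ε^2 + p^2)^2) :=
                mul_le_mul_of_nonneg_left hTB2 (sq_nonneg _)
            _ = 4 * ((ε^2 + p^2)^2 * (ε^2 + q^2)^2) := by ring
        have h4 : (4 * ((ε^2 + p^2)^2 * (ε^2 + q^2)^2))⁻¹
            ≤ ((ε^2 + q^2)^2 * (t^2 + q^2)^2)⁻¹ := inv_anti₀ (by positivity) hX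
        have hnn : (0:ℝ) ≤ ((ε^2 + p^2)^2 * (t^2 + p^2)^2)⁻¹ := by positivity
        calc ((ε^2 + p^2)^2 * (ε^2 + q^2)^2)⁻¹
            = 4 * (4 * ((ε^2 + p^2)^2 * (ε^2 + q^2)^2))⁻¹ := by
              have h1 : ((ε^2 + p^2)^2 : ℝ) ≠ 0 := by positivity
              have h2 : ((ε^2 + q^2)^2 : ℝ) ≠ 0 := by positivity
              field_simp
          _ ≤ 4 * ((ε^2 + q^2)^2 * (t^2 + q^2)^2)⁻¹ := by linarith
          _ ≤ 4 * (((ε^2 + p^2)^2 * (t^2 + p^2)^2)⁻¹ + ((ε^2 + q^2)^2 * (t^2 + q^2)^2)⁻¹) := by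
              linarith
    calc c4^4 * ε^4 * ((ε^2 + p^2)^2 * (ε^2 + q^2)^2)⁻¹
        ≤ c4^4 * ε^4 * (4 * (((ε^2 + p^2)^2 * (t^2 + p^2)^2)⁻¹
            + ((ε^2 + q^2)^2 * (t^2 + q^2)^2)⁻¹)) := by
          apply mul_le_mul_of_nonneg_left main (by positivity)
      _ = 4 * c4^4 * ε^4 * (((ε^2 + p^2)^2 * (t^2 + p^2)^2)⁻¹
            + ((ε^2 + q^2)^2 * (t^2 + q^2)^2)⁻¹) := by ring
  -- bound on ∫ h
  have hL0 : 0 ≤ Real.log (t / ε) := Real.log_nonneg ((one_le_div hε).2 hεt)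
  have hIntBound : ∫ x : E4, h x ≤ 4 * V * ((t^4)⁻¹ * (1 + Real.log (t / ε))) := by
    rw [hh, aux_radial]
    have := aux_radial_bound hε hεt
    calc 4 * (V * ∫ r in Ioi (0:ℝ), r ^ 3 * ((ε^2 + r^2)^2 * (t^2 + r^2)^2)⁻¹)
        ≤ 4 * (V * ((t^4)⁻¹ * (1 + Real.log (t / ε)))) := by
          apply mul_le_mul_of_nonneg_left _ (by norm_num)
          exact mul_le_mul_of_nonneg_left this hVpos.le
      _ = 4 * V * ((t^4)⁻¹ * (1 + Real.log (t / ε))) := by ring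
  -- final assembly
  calc (∫ x : E4, Ueps ε a x ^ 2 * Ueps ε (-a) x ^ 2)
      ≤ ∫ x : E4, 4 * c4^4 * ε^4 * (h (x - a) + h (x + a)) := by
        refine integral_mono_of_nonneg (Filter.Eventually.of_forall fun x => by positivity)
          (((hIntA.add hIntB).const_mul _)) (Filter.Eventually.of_forall key)
    _ = 4 * c4^4 * ε^4 * ((∫ x : E4, h (x - a)) + ∫ x : E4, h (x + a)) := by
        rw [integral_const_mul, integral_add hIntA hIntB]
    _ = 8 * c4^4 * ε^4 * ∫ x : E4, h x := by
        rw [integral_sub_right_eq_self h a, integral_add_right_eq_self h a]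
        ring
    _ ≤ 8 * c4^4 * ε^4 * (4 * V * ((t^4)⁻¹ * (1 + Real.log (t / ε)))) := by
        apply mul_le_mul_of_nonneg_left hIntBound (by positivity)
    _ = 32 * c4^4 * V * (ε ^ 4 / t ^ 4) * (1 + Real.log (t / ε)) := by
        field_simp
        ring
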